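/- Let 𝓗 be a complex Hilbert space, let U : ℝ → (𝓗 →L[ℂ] 𝓗) be such that each U(t) is unitary and for each ψ ∈ 𝓗 the map t ↦ U(t)ψ is continuous. Let w : 𝓗 →L[ℂ] 𝓗 be a bounded operator and c ≥ 0 a constant such that the local decay estimate ∫₀^∞ ‖w(U(t)ψ)‖² dt ≤ c‖ψ‖² holds for every ψ ∈ 𝓗. Let Q₀ : 𝓗 →L[ℂ] 𝓗 be bounded. Then there exists a bounded operator B : 𝓗 →L[ℂ] 𝓗 with ‖B‖ ≤ c‖Q₀‖ such that for all ψ, φ ∈ 𝓗 the function s ↦ ⟪w(U(s)ψ), Q₀(w(U(s)φ))⟫ is integrable on [0,∞) and ⟪ψ, Bφ⟫ = −∫₀^∞ ⟪w(U(s)ψ), Q₀(w(U(s)φ))⟫ ds. Moreover, if Q₀ is self-adjoint then B is self-adjoint, and if Re⟪φ, Q₀φ⟫ ≤ 0 for all φ then Re⟪φ, Bφ⟫ ≥ 0 for all φ. -/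

import Mathlib

open MeasureTheory

section AdaptorAux

variable {𝓗 : Type*} [NormedAddCommGroup 𝓗] [InnerProductSpace ℂ 𝓗] [CompleteSpace 𝓗]
  (U : ℝ → 𝓗 →L[ℂ] 𝓗) (w Q₀ : 𝓗 →L[ℂ] 𝓗)

private lemma adaptor_ptbound (ψ φ : 𝓗) (s : ℝ) :
    ‖(inner ℂ (w (U s ψ)) (Q₀ (w (U s φ))) : ℂ)‖
      ≤ ‖Q₀‖ / 2 * (‖w (U s ψ)‖ ^ 2 + ‖w (U s φ)‖ ^ 2) := by
  have h1 : ‖(inner ℂ (w (U s ψ)) (Q₀ (w (U s φ))) : ℂ)‖ ≤ ‖w (U s ψ)‖ * ‖Q₀ (w (U s φ))‖ :=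
    norm_inner_le_norm _ _
  have h2 : ‖Q₀ (w (U s φ))‖ ≤ ‖Q₀‖ * ‖w (U s φ)‖ := Q₀.le_opNorm _
  nlinarith [norm_nonneg (w (U s ψ)), norm_nonneg (w (U s φ)), norm_nonneg Q₀,
    sq_nonneg (‖w (U s ψ)‖ - ‖w (U s φ)‖),
    norm_nonneg ((inner ℂ (w (U s ψ)) (Q₀ (w (U s φ))) : ℂ))]

private lemma adaptor_int
    (hUcont : ∀ ψ : 𝓗, Continuous fun t => U t ψ)
    (hLDint : ∀ ψ : 𝓗, IntegrableOn (fun t => ‖w (U t ψ)‖ ^ 2) (Set.Ioi (0 : ℝ)))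
    (ψ φ : 𝓗) :
    IntegrableOn (fun s => (inner ℂ (w (U s ψ)) (Q₀ (w (U s φ))) : ℂ)) (Set.Ioi (0:ℝ)) := by
  have hKcont : Continuous (fun s => (inner ℂ (w (U s ψ)) (Q₀ (w (U s φ))) : ℂ)) :=
    Continuous.inner (w.continuous.comp (hUcont ψ))
      ((Q₀.continuous.comp w.continuous).comp (hUcont φ))
  have hg : IntegrableOn (fun s => ‖Q₀‖ / 2 * (‖w (U s ψ)‖ ^ 2 + ‖w (U s φ)‖ ^ 2))
      (Set.Ioi (0:ℝ)) := ((hLDint ψ).add (hLDint φ)).const_mul _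
  exact Integrable.mono' hg hKcont.aestronglyMeasurable.restrict
    (Filter.Eventually.of_forall (adaptor_ptbound U w Q₀ ψ φ))

private lemma adaptor_bound2
    (hUcont : ∀ ψ : 𝓗, Continuous fun t => U t ψ) {c : ℝ}
    (hLDint : ∀ ψ : 𝓗, IntegrableOn (fun t => ‖w (U t ψ)‖ ^ 2) (Set.Ioi (0 : ℝ)))
    (hLD : ∀ ψ : 𝓗, ∫ t in Set.Ioi (0 : ℝ), ‖w (U t ψ)‖ ^ 2 ≤ c * ‖ψ‖ ^ 2)
    (ψ φ : 𝓗) :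
    ‖∫ s in Set.Ioi (0:ℝ), (inner ℂ (w (U s ψ)) (Q₀ (w (U s φ))) : ℂ)‖
      ≤ ‖Q₀‖ / 2 * (c * ‖ψ‖ ^ 2 + c * ‖φ‖ ^ 2) := by
  have hg : IntegrableOn (fun s => ‖Q₀‖ / 2 * (‖w (U s ψ)‖ ^ 2 + ‖w (U s φ)‖ ^ 2))
      (Set.Ioi (0:ℝ)) := ((hLDint ψ).add (hLDint φ)).const_mul _
  calc ‖∫ s in Set.Ioi (0:ℝ), (inner ℂ (w (U s ψ)) (Q₀ (w (U s φ))) : ℂ)‖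
      ≤ ∫ s in Set.Ioi (0:ℝ), ‖(inner ℂ (w (U s ψ)) (Q₀ (w (U s φ))) : ℂ)‖ :=
        norm_integral_le_integral_norm _
    _ ≤ ∫ s in Set.Ioi (0:ℝ), ‖Q₀‖ / 2 * (‖w (U s ψ)‖ ^ 2 + ‖w (U s φ)‖ ^ 2) :=
        integral_mono (adaptor_int U w Q₀ hUcont hLDint ψ φ).norm hg
          (adaptor_ptbound U w Q₀ ψ φ)
    _ = ‖Q₀‖ / 2 * ((∫ s in Set.Ioi (0:ℝ), ‖w (U s ψ)‖ ^ 2)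
          + ∫ s in Set.Ioi (0:ℝ), ‖w (U s φ)‖ ^ 2) := by
        rw [integral_const_mul, integral_add (hLDint ψ) (hLDint φ)]
    _ ≤ ‖Q₀‖ / 2 * (c * ‖ψ‖ ^ 2 + c * ‖φ‖ ^ 2) := by
        have h1 := hLD ψ; have h2 := hLD φ
        have h0 : (0:ℝ) ≤ ‖Q₀‖ / 2 := by positivity
        nlinarith

private lemma adaptor_smul (a b : ℂ) (ψ φ : 𝓗) :
    (∫ s in Set.Ioi (0:ℝ), (inner ℂ (w (U s (a • ψ))) (Q₀ (w (U s (b • φ)))) : ℂ))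
      = (starRingEnd ℂ) a * b
          * ∫ s in Set.Ioi (0:ℝ), (inner ℂ (w (U s ψ)) (Q₀ (w (U s φ))) : ℂ) := by
  rw [← integral_const_mul]
  congr 1
  funext s
  simp only [_root_.map_smul, inner_smul_left, inner_smul_right]
  ring

private lemma adaptor_bound
    (hUcont : ∀ ψ : 𝓗, Continuous fun t => U t ψ) {c : ℝ} (hc : 0 ≤ c)
    (hLDint : ∀ ψ : 𝓗, IntegrableOn (fun t => ‖w (U t ψ)‖ ^ 2) (Set.Ioi (0 : ℝ)))
    (hLD : ∀ ψ : 𝓗, ∫ t in Set.Ioi (0 : ℝ), ‖w (U t ψ)‖ ^ 2 ≤ c * ‖ψ‖ ^ 2)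
    (ψ φ : 𝓗) :
    ‖∫ s in Set.Ioi (0:ℝ), (inner ℂ (w (U s ψ)) (Q₀ (w (U s φ))) : ℂ)‖
      ≤ c * ‖Q₀‖ * ‖ψ‖ * ‖φ‖ := by
  rcases eq_or_ne ψ 0 with rfl | hψ
  · simp
  rcases eq_or_ne φ 0 with rfl | hφ
  · simp
  have hψn : (0:ℝ) < ‖ψ‖ := norm_pos_iff.mpr hψ
  have hφn : (0:ℝ) < ‖φ‖ := norm_pos_iff.mpr hφ
  have key := adaptor_bound2 U w Q₀ hUcont hLDint hLD
    (((‖ψ‖ : ℂ)⁻¹) • ψ) (((‖φ‖ : ℂ)⁻¹) • φ)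
  rw [adaptor_smul] at key
  have hnψ : ‖((‖ψ‖ : ℂ)⁻¹) • ψ‖ = 1 := by
    rw [norm_smul, norm_inv, Complex.norm_real, Real.norm_of_nonneg hψn.le]
    field_simp
  have hnφ : ‖((‖φ‖ : ℂ)⁻¹) • φ‖ = 1 := by
    rw [norm_smul, norm_inv, Complex.norm_real, Real.norm_of_nonneg hφn.le]
    field_simp
  rw [hnψ, hnφ, norm_mul, norm_mul, RCLike.norm_conj, norm_inv, norm_inv,
    Complex.norm_real, Complex.norm_real,
    Real.norm_of_nonneg hψn.le, Real.norm_of_nonneg hφn.le] at key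
  have hQn : (0:ℝ) ≤ ‖Q₀‖ := norm_nonneg _
  have hb : ‖ψ‖⁻¹ * ‖φ‖⁻¹
      * ‖∫ s in Set.Ioi (0:ℝ), (inner ℂ (w (U s ψ)) (Q₀ (w (U s φ))) : ℂ)‖
      ≤ c * ‖Q₀‖ := by
    calc ‖ψ‖⁻¹ * ‖φ‖⁻¹ * ‖∫ s in Set.Ioi (0:ℝ), (inner ℂ (w (U s ψ)) (Q₀ (w (U s φ))) : ℂ)‖
        ≤ ‖Q₀‖ / 2 * (c * 1 ^ 2 + c * 1 ^ 2) := key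
      _ = c * ‖Q₀‖ := by ring
  have := mul_le_mul_of_nonneg_left hb (by positivity : (0:ℝ) ≤ ‖ψ‖ * ‖φ‖)
  calc ‖∫ s in Set.Ioi (0:ℝ), (inner ℂ (w (U s ψ)) (Q₀ (w (U s φ))) : ℂ)‖
      = ‖ψ‖ * ‖φ‖ * (‖ψ‖⁻¹ * ‖φ‖⁻¹
          * ‖∫ s in Set.Ioi (0:ℝ), (inner ℂ (w (U s ψ)) (Q₀ (w (U s φ))) : ℂ)‖) := by
        field_simp
    _ ≤ ‖ψ‖ * ‖φ‖ * (c * ‖Q₀‖) := this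
    _ = c * ‖Q₀‖ * ‖ψ‖ * ‖φ‖ := by ring

end AdaptorAux

/-- Construction of the adaptor operator
`B = ∫₀^∞ U(s)* (−w Q₀ w) U(s) ds` from a local decay estimate: given a
continuous unitary family `U(t)`, a weight `w` satisfying the local decay
estimate `∫₀^∞ ‖w U(t) ψ‖² dt ≤ c‖ψ‖²`, and a bounded `Q₀`, there is a bounded
operator `B` with `‖B‖ ≤ c‖Q₀‖` whose sesquilinear form is
`⟪ψ, Bφ⟫ = −∫₀^∞ ⟪w U(s) ψ, Q₀ w U(s) φ⟫ ds`; moreover `B` is self-adjoint if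
`Q₀` is, and `B ≥ 0` if `Re⟪φ, Q₀ φ⟫ ≤ 0` for all `φ`. -/
theorem adaptor_operator_exists
    {𝓗 : Type*} [NormedAddCommGroup 𝓗] [InnerProductSpace ℂ 𝓗] [CompleteSpace 𝓗]
    (U : ℝ → 𝓗 →L[ℂ] 𝓗)
    (hUunit : ∀ t, U t ∈ unitary (𝓗 →L[ℂ] 𝓗))
    (hUcont : ∀ ψ : 𝓗, Continuous fun t => U t ψ)
    (w : 𝓗 →L[ℂ] 𝓗) (c : ℝ) (hc : 0 ≤ c)
    (hLDint : ∀ ψ : 𝓗, IntegrableOn (fun t => ‖w (U t ψ)‖ ^ 2) (Set.Ioi (0 : ℝ)))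
    (hLD : ∀ ψ : 𝓗, ∫ t in Set.Ioi (0 : ℝ), ‖w (U t ψ)‖ ^ 2 ≤ c * ‖ψ‖ ^ 2)
    (Q₀ : 𝓗 →L[ℂ] 𝓗) :
    ∃ B : 𝓗 →L[ℂ] 𝓗, ‖B‖ ≤ c * ‖Q₀‖ ∧
      (∀ ψ φ : 𝓗,
        IntegrableOn (fun s => (inner ℂ (w (U s ψ)) (Q₀ (w (U s φ))) : ℂ))
          (Set.Ioi (0 : ℝ)) ∧
        (inner ℂ ψ (B φ) : ℂ)
          = -∫ s in Set.Ioi (0 : ℝ), (inner ℂ (w (U s ψ)) (Q₀ (w (U s φ))) : ℂ)) ∧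
      (IsSelfAdjoint Q₀ → IsSelfAdjoint B) ∧
      ((∀ φ : 𝓗, (inner ℂ φ (Q₀ φ) : ℂ).re ≤ 0) →
        ∀ φ : 𝓗, 0 ≤ (inner ℂ φ (B φ) : ℂ).re) := by
  classical
  have hKint := adaptor_int U w Q₀ hUcont hLDint
  have hbound := adaptor_bound U w Q₀ hUcont hc hLDint hLD
  have hint_add_left : ∀ (ψ₁ ψ₂ φ : 𝓗),
      (∫ s in Set.Ioi (0:ℝ), (inner ℂ (w (U s (ψ₁ + ψ₂))) (Q₀ (w (U s φ))) : ℂ))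
        = (∫ s in Set.Ioi (0:ℝ), (inner ℂ (w (U s ψ₁)) (Q₀ (w (U s φ))) : ℂ))
          + ∫ s in Set.Ioi (0:ℝ), (inner ℂ (w (U s ψ₂)) (Q₀ (w (U s φ))) : ℂ) := by
    intro ψ₁ ψ₂ φ
    rw [← integral_add (hKint ψ₁ φ) (hKint ψ₂ φ)]
    congr 1; funext s
    simp [map_add, inner_add_left]
  have hint_add_right : ∀ (ψ φ₁ φ₂ : 𝓗),
      (∫ s in Set.Ioi (0:ℝ), (inner ℂ (w (U s ψ)) (Q₀ (w (U s (φ₁ + φ₂)))) : ℂ))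
        = (∫ s in Set.Ioi (0:ℝ), (inner ℂ (w (U s ψ)) (Q₀ (w (U s φ₁))) : ℂ))
          + ∫ s in Set.Ioi (0:ℝ), (inner ℂ (w (U s ψ)) (Q₀ (w (U s φ₂))) : ℂ) := by
    intro ψ φ₁ φ₂
    rw [← integral_add (hKint ψ φ₁) (hKint ψ φ₂)]
    congr 1; funext s
    simp [map_add, inner_add_right]
  have hint_smul_left : ∀ (a : ℂ) (ψ φ : 𝓗),
      (∫ s in Set.Ioi (0:ℝ), (inner ℂ (w (U s (a • ψ))) (Q₀ (w (U s φ))) : ℂ))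
        = (starRingEnd ℂ) a
            * ∫ s in Set.Ioi (0:ℝ), (inner ℂ (w (U s ψ)) (Q₀ (w (U s φ))) : ℂ) := by
    intro a ψ φ
    rw [← integral_const_mul]
    congr 1; funext s
    simp [_root_.map_smul, inner_smul_left]
    ring
  have hint_smul_right : ∀ (a : ℂ) (ψ φ : 𝓗),
      (∫ s in Set.Ioi (0:ℝ), (inner ℂ (w (U s ψ))  (Q₀ (w (U s (a • φ)))) : ℂ))
        = a * ∫ s in Set.Ioi (0:ℝ), (inner ℂ (w (U s ψ)) (Q₀ (w (U s φ))) : ℂ) := by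
    intro a ψ φ
    rw [← integral_const_mul]
    congr 1; funext s
    simp [_root_.map_smul, inner_smul_right]
  -- the functional ψ ↦ conj (-(∫ K ψ φ))
  have hQn : (0:ℝ) ≤ c * ‖Q₀‖ := by positivity
  let f : 𝓗 → (𝓗 →L[ℂ] ℂ) := fun φ =>
    LinearMap.mkContinuous
      { toFun := fun ψ => (starRingEnd ℂ)
          (-(∫ s in Set.Ioi (0:ℝ), (inner ℂ (w (U s ψ)) (Q₀ (w (U s φ))) : ℂ)))
        map_add' := by
          intro ψ₁ ψ₂
          rw [hint_add_left]
          simp only [map_add, map_neg, neg_add]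
        map_smul' := by
          intro a ψ
          rw [hint_smul_left]
          simp only [map_neg, map_mul, RingHom.id_apply, Complex.conj_conj, smul_eq_mul,
            mul_neg] }
      (c * ‖Q₀‖ * ‖φ‖)
      (by
        intro ψ
        simp only [LinearMap.coe_mk, AddHom.coe_mk]
        rw [RCLike.norm_conj, norm_neg]
        calc ‖∫ s in Set.Ioi (0:ℝ), (inner ℂ (w (U s ψ)) (Q₀ (w (U s φ))) : ℂ)‖
            ≤ c * ‖Q₀‖ * ‖ψ‖ * ‖φ‖ := hbound ψ φ
          _ = c * ‖Q₀‖ * ‖φ‖ * ‖ψ‖ := by ring)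
  have hf_apply : ∀ φ ψ, f φ ψ = (starRingEnd ℂ)
      (-(∫ s in Set.Ioi (0:ℝ), (inner ℂ (w (U s ψ)) (Q₀ (w (U s φ))) : ℂ))) := fun φ ψ => rfl
  have hf_norm : ∀ φ, ‖f φ‖ ≤ c * ‖Q₀‖ * ‖φ‖ := fun φ =>
    LinearMap.mkContinuous_norm_le _ (by positivity) _
  -- the operator
  let Bl : 𝓗 →ₗ[ℂ] 𝓗 :=
    { toFun := fun φ => (InnerProductSpace.toDual ℂ 𝓗).symm (f φ)
      map_add' := by
        intro φ₁ φ₂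
        have hfa : f (φ₁ + φ₂) = f φ₁ + f φ₂ := by
          ext ψ
          simp only [hf_apply, ContinuousLinearMap.add_apply]
          rw [hint_add_right]
          simp only [map_add, map_neg, neg_add]
        rw [hfa, map_add]
      map_smul' := by
        intro a φ
        have hfs : f (a • φ) = (starRingEnd ℂ) a • f φ := by
          ext ψ
          simp only [hf_apply, ContinuousLinearMap.smul_apply]
          rw [hint_smul_right]
          simp only [map_neg, map_mul, smul_eq_mul, mul_neg]
        rw [hfs, LinearIsometryEquiv.map_smulₛₗ]
        simp }
  have hBl_norm : ∀ φ, ‖Bl φ‖ ≤ c * ‖Q₀‖ * ‖φ‖ := by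
    intro φ
    have hrfl : Bl φ = (InnerProductSpace.toDual ℂ 𝓗).symm (f φ) := rfl
    rw [hrfl, LinearIsometryEquiv.norm_map]
    exact hf_norm φ
  let B : 𝓗 →L[ℂ] 𝓗 := Bl.mkContinuous (c * ‖Q₀‖) hBl_norm
  have hform : ∀ ψ φ : 𝓗, (inner ℂ ψ (B φ) : ℂ)
      = -∫ s in Set.Ioi (0:ℝ), (inner ℂ (w (U s ψ)) (Q₀ (w (U s φ))) : ℂ) := by
    intro ψ φ
    have h1 : (inner ℂ (B φ) ψ : ℂ) = f φ ψ := InnerProductSpace.toDual_symm_apply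
    calc (inner ℂ ψ (B φ) : ℂ) = (starRingEnd ℂ) (inner ℂ (B φ) ψ : ℂ) :=
          (inner_conj_symm ψ (B φ)).symm
      _ = (starRingEnd ℂ) (f φ ψ) := by rw [h1]
      _ = -∫ s in Set.Ioi (0:ℝ), (inner ℂ (w (U s ψ)) (Q₀ (w (U s φ))) : ℂ) := by
          rw [hf_apply]
          simp
  refine ⟨B, LinearMap.mkContinuous_norm_le _ hQn _, fun ψ φ => ⟨hKint ψ φ, hform ψ φ⟩, ?_, ?_⟩
  · intro hQsa
    rw [ContinuousLinearMap.isSelfAdjoint_iff_isSymmetric]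
    have hQsym : (Q₀ : 𝓗 →ₗ[ℂ] 𝓗).IsSymmetric :=
      ContinuousLinearMap.isSelfAdjoint_iff_isSymmetric.mp hQsa
    intro x y
    have hconjK : ∀ s : ℝ,
        (starRingEnd ℂ) (inner ℂ (w (U s y)) (Q₀ (w (U s x))) : ℂ)
          = (inner ℂ (w (U s x)) (Q₀ (w (U s y))) : ℂ) := by
      intro s
      rw [inner_conj_symm]
      exact hQsym (w (U s x)) (w (U s y))
    calc (inner ℂ ((B : 𝓗 →ₗ[ℂ] 𝓗) x) y : ℂ)
        = (starRingEnd ℂ) (inner ℂ y (B x) : ℂ) := (inner_conj_symm _ _).symm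
      _ = (starRingEnd ℂ)
            (-∫ s in Set.Ioi (0:ℝ), (inner ℂ (w (U s y)) (Q₀ (w (U s x))) : ℂ)) := by
          rw [hform y x]
      _ = -∫ s in Set.Ioi (0:ℝ),
            (starRingEnd ℂ) (inner ℂ (w (U s y)) (Q₀ (w (U s x))) : ℂ) := by
          rw [map_neg, ← integral_conj]
      _ = -∫ s in Set.Ioi (0:ℝ), (inner ℂ (w (U s x)) (Q₀ (w (U s y))) : ℂ) := by
          congr 1
          exact integral_congr_ae (Filter.Eventually.of_forall fun s => hconjK s)
      _ = (inner ℂ x ((B : 𝓗 →ₗ[ℂ] 𝓗) y) : ℂ) := (hform x y).symm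
  · intro hQ φ
    rw [hform φ φ]
    have hre : (-∫ s in Set.Ioi (0:ℝ), (inner ℂ (w (U s φ)) (Q₀ (w (U s φ))) : ℂ)).re
        = -∫ s in Set.Ioi (0:ℝ), (inner ℂ (w (U s φ)) (Q₀ (w (U s φ))) : ℂ).re := by
      rw [Complex.neg_re]
      congr 1
      exact (integral_re (hKint φ φ)).symm
    rw [hre]
    have hle : (∫ s in Set.Ioi (0:ℝ), (inner ℂ (w (U s φ)) (Q₀ (w (U s φ))) : ℂ).re) ≤ 0 :=
      integral_nonpos fun s => hQ (w (U s φ))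
    linarith
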